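/- Let m, n ≥ 1 and let N be a member of T^c_{m,n}. For subsets A, B, C ⊆ N, write A ⫝^I_C B if cl_N(A∪C) ∩ cl_N(B∪C) = cl_N(C) and no element of cl_N(A∪C)∖cl_N(C) is incident with or equal to any element of cl_N(B∪C)∖cl_N(C). Then ⫝^I satisfies local character: for all A, B ⊆ N there exists C ⊆ B with |C| ≤ |A| + ℵ₀ such that A ⫝^I_C B. -/

import Mathlib

universe u v

/-- An incidence structure on the type `M`: "points" and "lines" partition `M`,
and incidence only holds between a point and a line. -/
structure IncidenceData (M : Type u) where
  pt : M → Prop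
  ln : M → Prop
  inc : M → M → Prop
  pt_or_ln : ∀ z, pt z ∨ ln z
  not_pt_and_ln : ∀ z, ¬(pt z ∧ ln z)
  inc_pt_ln : ∀ x y, inc x y → pt x ∧ ln y

/-- `K_{m,n}`-freeness: there are no `m` pairwise distinct points and `n` pairwise
distinct lines with every one of the points incident to every one of the lines. -/
def KFree (m n : ℕ) {M : Type u} (S : IncidenceData M) : Prop :=
  ¬∃ (a : Fin m → M) (b : Fin n → M),
      Function.Injective a ∧ Function.Injective b ∧
      (∀ i, S.pt (a i)) ∧ (∀ j, S.ln (b j)) ∧ ∀ i j, S.inc (a i) (b j)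

/-- Membership in `T^c_{m,n}`: a `K_{m,n}`-free incidence structure in which every `m`
pairwise distinct points are simultaneously incident to exactly `n-1` pairwise distinct
lines, and every `n` pairwise distinct lines are simultaneously incident to exactly
`m-1` pairwise distinct points. -/
def Complete (m n : ℕ) {M : Type u} (S : IncidenceData M) : Prop :=
  KFree m n S ∧
  (∀ a : Fin m → M, Function.Injective a → (∀ i, S.pt (a i)) →
    ∃ b : Fin (n - 1) → M, Function.Injective b ∧ (∀ j, S.ln (b j)) ∧
      (∀ i j, S.inc (a i) (b j)) ∧ ∀ y, S.ln y → (∀ i, S.inc (a i) y) → ∃ j, y = b j) ∧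
  (∀ b : Fin n → M, Function.Injective b → (∀ j, S.ln (b j)) →
    ∃ a : Fin (m - 1) → M, Function.Injective a ∧ (∀ i, S.pt (a i)) ∧
      (∀ i j, S.inc (a i) (b j)) ∧ ∀ x, S.pt x → (∀ j, S.inc x (b j)) → ∃ i, x = a i)

/-- An embedding of incidence structures: an injective map preserving points, lines,
incidence and non-incidence. -/
structure IncEmbedding {M : Type u} {N : Type v} (S : IncidenceData M)
    (T : IncidenceData N) where
  toFun : M → N
  inj : Function.Injective toFun
  pt_iff : ∀ x, T.pt (toFun x) ↔ S.pt x
  ln_iff : ∀ x, T.ln (toFun x) ↔ S.ln x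
  inc_iff : ∀ x y, T.inc (toFun x) (toFun y) ↔ S.inc x y

/-- A subset `Y` is `I`-closed: whenever `m` pairwise distinct points of `Y` are all
incident to an element `y` of `M`, then `y ∈ Y`, and dually for `n` pairwise distinct
lines of `Y`. -/
def IClosedD (m n : ℕ) {M : Type u} (S : IncidenceData M) (Y : Set M) : Prop :=
  (∀ (a : Fin m → M) (y : M), Function.Injective a → (∀ i, S.pt (a i)) →
    (∀ i, a i ∈ Y) → (∀ i, S.inc (a i) y) → y ∈ Y) ∧
  (∀ (b : Fin n → M) (x : M), Function.Injective b → (∀ j, S.ln (b j)) →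
    (∀ j, b j ∈ Y) → (∀ j, S.inc x (b j)) → x ∈ Y)

/-- The `I`-closure of `A` in `M`: the smallest `I`-closed subset containing `A`. -/
def iclD (m n : ℕ) {M : Type u} (S : IncidenceData M) (A : Set M) : Set M :=
  ⋂₀ {Y : Set M | IClosedD m n S Y ∧ A ⊆ Y}

/-- The independence relation `A ⫝^I_C B`: the `I`-closures of `A ∪ C` and `B ∪ C`
intersect in the `I`-closure of `C`, and no element of `cl(A ∪ C) ∖ cl(C)` is incident
with or equal to any element of `cl(B ∪ C) ∖ cl(C)`. -/
def IndepI (m n : ℕ) {M : Type u} (S : IncidenceData M) (A B C : Set M) : Prop :=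
  iclD m n S (A ∪ C) ∩ iclD m n S (B ∪ C) = iclD m n S C ∧
    ∀ x ∈ iclD m n S (A ∪ C), x ∉ iclD m n S C →
      ∀ y ∈ iclD m n S (B ∪ C), y ∉ iclD m n S C →
        ¬S.inc x y ∧ ¬S.inc y x ∧ x ≠ y

namespace IclAux

variable {m n : ℕ} {M : Type u} {S : IncidenceData M}

lemma subset_icl (A : Set M) : A ⊆ iclD m n S A := fun x hx Y hY => hY.2 hx

lemma icl_min {A Y : Set M} (hY : IClosedD m n S Y) (hAY : A ⊆ Y) :
    iclD m n S A ⊆ Y := fun _ hx => hx Y ⟨hY, hAY⟩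

lemma icl_closed (A : Set M) : IClosedD m n S (iclD m n S A) := by
  constructor
  · intro a y ha hpt hmem hinc Y hY
    exact hY.1.1 a y ha hpt (fun i => hmem i Y hY) hinc
  · intro b x hb hln hmem hinc Y hY
    exact hY.1.2 b x hb hln (fun j => hmem j Y hY) hinc

lemma icl_mono {A B : Set M} (h : A ⊆ B) : iclD m n S A ⊆ iclD m n S B :=
  icl_min (icl_closed B) (h.trans (subset_icl B))

lemma icl_finitary {A : Set M} {x : M} (hx : x ∈ iclD m n S A) :
    ∃ F : Set M, F ⊆ A ∧ F.Finite ∧ x ∈ iclD m n S F := by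
  have hD : IClosedD m n S (⋃ F ∈ {F : Set M | F ⊆ A ∧ F.Finite}, iclD m n S F) := by
    constructor
    · intro a y ha hpt hmem hinc
      choose F hF using fun i => Set.mem_iUnion₂.1 (hmem i)
      have hFA : ∀ i, F i ⊆ A := fun i => (hF i).1.1
      have hFf : ∀ i, (F i).Finite := fun i => (hF i).1.2
      refine Set.mem_iUnion₂.2 ⟨⋃ i, F i, ⟨Set.iUnion_subset hFA,
        Set.finite_iUnion hFf⟩, ?_⟩
      exact (icl_closed _).1 a y ha hpt
        (fun i => icl_mono (Set.subset_iUnion F i) ((hF i).2)) hinc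
    · intro b x hb hln hmem hinc
      choose F hF using fun j => Set.mem_iUnion₂.1 (hmem j)
      refine Set.mem_iUnion₂.2 ⟨⋃ j, F j, ⟨Set.iUnion_subset fun j => (hF j).1.1,
        Set.finite_iUnion fun j => (hF j).1.2⟩, ?_⟩
      exact (icl_closed _).2 b x hb hln
        (fun j => icl_mono (Set.subset_iUnion F j) ((hF j).2)) hinc
  have hsub : A ⊆ ⋃ F ∈ {F : Set M | F ⊆ A ∧ F.Finite}, iclD m n S F := by
    intro z hz
    exact Set.mem_iUnion₂.2 ⟨{z}, ⟨Set.singleton_subset_iff.2 hz, Set.finite_singleton z⟩,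
      subset_icl _ rfl⟩
  obtain ⟨F, hF, hxF⟩ := Set.mem_iUnion₂.1 (icl_min hD hsub hx)
  exact ⟨F, hF.1, hF.2, hxF⟩

lemma icl_chain_union (hm : 1 ≤ m) (hn : 1 ≤ n) {D : ℕ → Set M} (hD : Monotone D) :
    iclD m n S (⋃ k, D k) ⊆ ⋃ k, iclD m n S (D k) := by
  apply icl_min
  · constructor
    · intro a y ha hpt hmem hinc
      choose g hg using fun i => Set.mem_iUnion.1 (hmem i)
      refine Set.mem_iUnion.2 ⟨Finset.univ.sup g, ?_⟩
      exact (icl_closed _).1 a y ha hpt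
        (fun i => icl_mono (hD (Finset.le_sup (Finset.mem_univ i))) (hg i)) hinc
    · intro b x hb hln hmem hinc
      choose g hg using fun j => Set.mem_iUnion.1 (hmem j)
      refine Set.mem_iUnion.2 ⟨Finset.univ.sup g, ?_⟩
      exact (icl_closed _).2 b x hb hln
        (fun j => icl_mono (hD (Finset.le_sup (Finset.mem_univ j))) (hg j)) hinc
  · exact Set.iUnion_subset fun k => (subset_icl (D k)).trans
      (Set.subset_iUnion (fun k => iclD m n S (D k)) k)



open Cardinal in
lemma icl_card (hS : Complete m n S) (hm : 1 ≤ m) (hn : 1 ≤ n) (A : Set M) :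
    Cardinal.mk (iclD m n S A) ≤ Cardinal.mk A + Cardinal.aleph0 := by
  classical
  set κ : Cardinal.{u} := #A + ℵ₀ with hκdef
  have hκ : ℵ₀ ≤ κ := self_le_add_left _ _
  obtain ⟨-, h2, h3⟩ := hS
  set f : (Fin m → M) → Fin (n - 1) → M := fun a =>
    if h : Function.Injective a ∧ ∀ i, S.pt (a i) then (h2 a h.1 h.2).choose
    else fun _ => a ⟨0, hm⟩ with hf
  set g : (Fin n → M) → Fin (m - 1) → M := fun b =>
    if h : Function.Injective b ∧ ∀ j, S.ln (b j) then (h3 b h.1 h.2).choose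
    else fun _ => b ⟨0, hn⟩ with hg
  have hfspec : ∀ a : Fin m → M, Function.Injective a → (∀ i, S.pt (a i)) →
      ∀ y, S.ln y → (∀ i, S.inc (a i) y) → ∃ j, y = f a j := by
    intro a hinj hpt y hy hincy
    have : f a = (h2 a hinj hpt).choose := by rw [hf]; exact dif_pos ⟨hinj, hpt⟩
    rw [this]
    exact (h2 a hinj hpt).choose_spec.2.2.2 y hy hincy
  have hgspec : ∀ b : Fin n → M, Function.Injective b → (∀ j, S.ln (b j)) →
      ∀ x, S.pt x → (∀ j, S.inc x (b j)) → ∃ i, x = g b i := by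
    intro b hinj hln x hx hincx
    have : g b = (h3 b hinj hln).choose := by rw [hg]; exact dif_pos ⟨hinj, hln⟩
    rw [this]
    exact (h3 b hinj hln).choose_spec.2.2.2 x hx hincx
  set X : ℕ → Set M := fun k => Nat.rec A (fun _ Xk =>
    Xk ∪ ({y | ∃ a : Fin m → M, (∀ i, a i ∈ Xk) ∧ ∃ j, y = f a j} ∪
          {x | ∃ b : Fin n → M, (∀ j, b j ∈ Xk) ∧ ∃ i, x = g b i})) k with hX
  have hXsucc : ∀ k, X (k + 1) =
      X k ∪ ({y | ∃ a : Fin m → M, (∀ i, a i ∈ X k) ∧ ∃ j, y = f a j} ∪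
          {x | ∃ b : Fin n → M, (∀ j, b j ∈ X k) ∧ ∃ i, x = g b i}) := fun k => rfl
  have hXmono : Monotone X := monotone_nat_of_le_succ fun k => by
    rw [hXsucc k]; exact Set.subset_union_left
  -- the union of the stages is I-closed
  have hclosed : IClosedD m n S (⋃ k, X k) := by
    constructor
    · intro a y ha hpt hmem hinc
      choose t ht using fun i => Set.mem_iUnion.1 (hmem i)
      have hmem' : ∀ i, a i ∈ X (Finset.univ.sup t) :=
        fun i => hXmono (Finset.le_sup (Finset.mem_univ i)) (ht i)
      have hy : S.ln y := (S.inc_pt_ln _ _ (hinc ⟨0, hm⟩)).2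
      obtain ⟨j, hj⟩ := hfspec a ha hpt y hy hinc
      refine Set.mem_iUnion.2 ⟨Finset.univ.sup t + 1, ?_⟩
      rw [hXsucc]
      exact Or.inr (Or.inl ⟨a, hmem', j, hj⟩)
    · intro b x hb hln hmem hinc
      choose t ht using fun j => Set.mem_iUnion.1 (hmem j)
      have hmem' : ∀ j, b j ∈ X (Finset.univ.sup t) :=
        fun j => hXmono (Finset.le_sup (Finset.mem_univ j)) (ht j)
      have hx : S.pt x := (S.inc_pt_ln _ _ (hinc ⟨0, hn⟩)).1
      obtain ⟨i, hi⟩ := hgspec b hb hln x hx hinc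
      refine Set.mem_iUnion.2 ⟨Finset.univ.sup t + 1, ?_⟩
      rw [hXsucc]
      exact Or.inr (Or.inr ⟨b, hmem', i, hi⟩)
  -- cardinality bound for each stage
  have harrow : ∀ (s : Set M) (p : ℕ), #s ≤ κ → #(Fin p → s) ≤ κ := by
    intro s p hs
    refine le_trans (Cardinal.mk_le_of_injective (f := fun a : Fin p → s => List.ofFn a)
      List.ofFn_injective) (le_trans (Cardinal.mk_list_le_max _) (max_le hκ hs))
  have hrange : ∀ (s : Set M) (p q : ℕ) (F : (Fin p → M) → Fin q → M), #s ≤ κ →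
      #({y | ∃ a : Fin p → M, (∀ i, a i ∈ s) ∧ ∃ j, y = F a j} : Set M) ≤ κ := by
    intro s p q F hs
    have hsub : {y | ∃ a : Fin p → M, (∀ i, a i ∈ s) ∧ ∃ j, y = F a j} ⊆
        Set.range (fun pr : (Fin p → s) × (ULift.{u} (Fin q)) =>
          F (fun i => (pr.1 i : M)) pr.2.down) := by
      rintro y ⟨a, ha, j, rfl⟩
      exact ⟨(fun i => ⟨a i, ha i⟩, ⟨j⟩), rfl⟩
    refine le_trans (Cardinal.mk_le_mk_of_subset hsub) (le_trans Cardinal.mk_range_le ?_)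
    have : #((Fin p → s) × (ULift.{u} (Fin q))) = #(Fin p → s) * #(ULift.{u} (Fin q)) :=
      Cardinal.mk_prod _ _ |>.trans (by rw [Cardinal.lift_id, Cardinal.lift_id])
    rw [this]
    have h1 : #(ULift.{u} (Fin q)) ≤ ℵ₀ := by
      simp [Cardinal.mk_uLift]
    calc #(Fin p → s) * #(ULift.{u} (Fin q)) ≤ κ * κ :=
          mul_le_mul' (harrow s p hs) (h1.trans hκ)
      _ = κ := Cardinal.mul_eq_self hκ
  have hXcard : ∀ k, #(X k) ≤ κ := by
    intro k
    induction k with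
    | zero => exact le_trans le_rfl (self_le_add_right _ _)
    | succ k ih =>
      rw [hXsucc k]
      refine le_trans (Cardinal.mk_union_le _ _) ?_
      refine le_trans (add_le_add ih (le_trans (Cardinal.mk_union_le _ _)
        (add_le_add (hrange _ m (n-1) f ih) (hrange _ n (m-1) g ih)))) ?_
      rw [Cardinal.add_eq_self hκ, Cardinal.add_eq_self hκ]
  -- total bound
  have hUeq : (⋃ k, X k) = ⋃ k : ULift.{u} ℕ, X k.down := by
    ext z
    simp only [Set.mem_iUnion]
    exact ⟨fun ⟨k, h⟩ => ⟨⟨k⟩, h⟩, fun ⟨k, h⟩ => ⟨k.down, h⟩⟩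
  have hUcard : #(⋃ k, X k) ≤ κ := by
    rw [hUeq]
    refine le_trans (Cardinal.mk_iUnion_le _) ?_
    have h1 : #(ULift.{u} ℕ) = ℵ₀ := by simp [Cardinal.mk_uLift]
    have h2 : ⨆ k : ULift.{u} ℕ, #(X k.down) ≤ κ := ciSup_le' fun k => hXcard k.down
    calc #(ULift.{u} ℕ) * ⨆ k : ULift.{u} ℕ, #(X k.down) ≤ κ * κ := by
          rw [h1]; exact mul_le_mul' hκ h2
      _ = κ := Cardinal.mul_eq_self hκ
  refine le_trans (Cardinal.mk_le_mk_of_subset ?_) hUcard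
  exact icl_min hclosed (Set.subset_iUnion X 0)

lemma inc_finite (hm : 1 ≤ m) (hn : 1 ≤ n) {B : Set M} {x : M}
    (hx : x ∉ iclD m n S B) :
    ({y ∈ iclD m n S B | S.inc x y ∨ S.inc y x}).Finite := by
  by_contra hinf
  have hinf : ({y ∈ iclD m n S B | S.inc x y ∨ S.inc y x}).Infinite := hinf
  rcases S.pt_or_ln x with hxpt | hxln
  · -- x is a point: all elements of the set are lines incident to x
    have hall : ∀ y ∈ {y ∈ iclD m n S B | S.inc x y ∨ S.inc y x},
        S.ln y ∧ S.inc x y := by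
      rintro y ⟨hy, hxy | hyx⟩
      · exact ⟨(S.inc_pt_ln _ _ hxy).2, hxy⟩
      · exact absurd ⟨hxpt, (S.inc_pt_ln _ _ hyx).2⟩ (S.not_pt_and_ln x)
    set ι := hinf.natEmbedding
    set b : Fin n → M := fun j => (ι j : M) with hb
    have hbinj : Function.Injective b := by
      intro j1 j2 h
      have := ι.injective (Subtype.ext h)
      exact Fin.ext (by exact_mod_cast congrArg id this)
    exact hx ((icl_closed B).2 b x hbinj
      (fun j => (hall _ (ι j).2).1) (fun j => ((ι j).2).1)
      (fun j => (hall _ (ι j).2).2))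
  · -- x is a line: all elements of the set are points incident to x
    have hall : ∀ y ∈ {y ∈ iclD m n S B | S.inc x y ∨ S.inc y x},
        S.pt y ∧ S.inc y x := by
      rintro y ⟨hy, hxy | hyx⟩
      · exact absurd ⟨(S.inc_pt_ln _ _ hxy).1, hxln⟩ (S.not_pt_and_ln x)
      · exact ⟨(S.inc_pt_ln _ _ hyx).1, hyx⟩
    set ι := hinf.natEmbedding
    set a : Fin m → M := fun i => (ι i : M) with ha
    have hainj : Function.Injective a := by
      intro i1 i2 h
      have := ι.injective (Subtype.ext h)
      exact Fin.ext (by exact_mod_cast congrArg id this)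
    exact hx ((icl_closed B).1 a x hainj
      (fun i => (hall _ (ι i).2).1) (fun i => ((ι i).2).1)
      (fun i => (hall _ (ι i).2).2))

open Cardinal in
theorem statement_17' (hS : Complete m n S) (hm : 1 ≤ m) (hn : 1 ≤ n) (A B : Set M) :
    ∃ C : Set M, C ⊆ B ∧
      Cardinal.mk C ≤ Cardinal.mk A + Cardinal.aleph0 ∧
      (iclD m n S (A ∪ C) ∩ iclD m n S (B ∪ C) = iclD m n S C ∧
    ∀ x ∈ iclD m n S (A ∪ C), x ∉ iclD m n S C →
      ∀ y ∈ iclD m n S (B ∪ C), y ∉ iclD m n S C →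
        ¬S.inc x y ∧ ¬S.inc y x ∧ x ≠ y) := by
  classical
  set κ : Cardinal.{u} := #A + ℵ₀ with hκdef
  have hκ : ℵ₀ ≤ κ := self_le_add_left _ _
  -- finite generating sets for elements of `cl B`
  have hF : ∀ y : M, ∃ F : Set M, F ⊆ B ∧ F.Finite ∧
      (y ∈ iclD m n S B → y ∈ iclD m n S F) := by
    intro y
    by_cases h : y ∈ iclD m n S B
    · obtain ⟨F, h1, h2, h3⟩ := icl_finitary h
      exact ⟨F, h1, h2, fun _ => h3⟩
    · exact ⟨∅, by simp, Set.finite_empty, fun hy => absurd hy h⟩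
  choose F hFB hFfin hFcl using hF
  -- the trace of `x` on `cl B`
  set Z : M → Set M := fun x =>
    {y ∈ iclD m n S B | y = x ∨ (x ∉ iclD m n S B ∧ (S.inc x y ∨ S.inc y x))} with hZ
  have hZfin : ∀ x, (Z x).Finite := by
    intro x
    by_cases h : x ∈ iclD m n S B
    · apply Set.Finite.subset (Set.finite_singleton x)
      rintro y ⟨hy, rfl | ⟨hxB, -⟩⟩
      · rfl
      · exact absurd h hxB
    · apply Set.Finite.subset ((inc_finite hm hn h).union (Set.finite_singleton x))
      rintro y ⟨hy, rfl | ⟨-, hincx⟩⟩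
      · exact Or.inr rfl
      · exact Or.inl ⟨hy, hincx⟩
  set G : M → Set M := fun x => ⋃ y ∈ Z x, F y with hG
  have hGB : ∀ x, G x ⊆ B := fun x => Set.iUnion₂_subset fun y _ => hFB y
  have hGfin : ∀ x, (G x).Finite := fun x => (hZfin x).biUnion fun y _ => hFfin y
  have hGcl : ∀ x, Z x ⊆ iclD m n S (G x) := by
    intro x y hy
    exact icl_mono (Set.subset_iUnion₂ y hy) (hFcl y hy.1)
  -- the recursive construction of C
  set C : ℕ → Set M := fun k => Nat.rec (∅ : Set M)
    (fun _ Ck => Ck ∪ ⋃ x ∈ iclD m n S (A ∪ Ck), G x) k with hC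
  have hCsucc : ∀ k, C (k+1) = C k ∪ ⋃ x ∈ iclD m n S (A ∪ C k), G x := fun k => rfl
  have hCmono : Monotone C := monotone_nat_of_le_succ fun k => by
    rw [hCsucc]; exact Set.subset_union_left
  have hCB : ∀ k, C k ⊆ B := by
    intro k; induction k with
    | zero => simp [hC]
    | succ k ih =>
      rw [hCsucc]
      exact Set.union_subset ih (Set.iUnion₂_subset fun x _ => hGB x)
  set Cs : Set M := ⋃ k, C k with hCs
  have hCsB : Cs ⊆ B := Set.iUnion_subset hCB
  -- cardinality bounds
  have hCcard : ∀ k, #(C k) ≤ κ := by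
    intro k; induction k with
    | zero =>
      have : #(C 0) = 0 := by rw [show C 0 = ∅ from rfl]; exact Cardinal.mk_emptyCollection M
      rw [this]; exact zero_le
    | succ k ih =>
      rw [hCsucc]
      refine le_trans (Cardinal.mk_union_le _ _) ?_
      have hclk : #(iclD m n S (A ∪ C k)) ≤ κ := by
        refine le_trans (icl_card hS hm hn _) ?_
        have e1 : #(A ∪ C k : Set M) ≤ κ :=
          le_trans (Cardinal.mk_union_le A (C k))
            (le_trans (add_le_add (self_le_add_right _ _) ih) (Cardinal.add_eq_self hκ).le)
        exact le_trans (add_le_add e1 hκ) (Cardinal.add_eq_self hκ).le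
      have hbU : #(⋃ x ∈ iclD m n S (A ∪ C k), G x) ≤ κ := by
        rw [Set.biUnion_eq_iUnion]
        refine le_trans (Cardinal.mk_iUnion_le _) ?_
        have h2 : ⨆ x : iclD m n S (A ∪ C k), #(G (x : M)) ≤ κ :=
          ciSup_le' fun x => le_trans ((hGfin (x : M)).lt_aleph0).le hκ
        calc #(iclD m n S (A ∪ C k)) * ⨆ x : iclD m n S (A ∪ C k), #(G (x : M)) ≤ κ * κ :=
              mul_le_mul' hclk h2
          _ = κ := Cardinal.mul_eq_self hκ
      exact le_trans (add_le_add ih hbU) (Cardinal.add_eq_self hκ).le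
  have hCscard : #Cs ≤ κ := by
    have hUeq : Cs = ⋃ k : ULift.{u} ℕ, C k.down := by
      ext z
      simp only [hCs, Set.mem_iUnion]
      exact ⟨fun ⟨k, h⟩ => ⟨⟨k⟩, h⟩, fun ⟨k, h⟩ => ⟨k.down, h⟩⟩
    rw [hUeq]
    refine le_trans (Cardinal.mk_iUnion_le _) ?_
    have h1 : #(ULift.{u} ℕ) = ℵ₀ := by simp [Cardinal.mk_uLift]
    have h2 : ⨆ k : ULift.{u} ℕ, #(C k.down) ≤ κ := ciSup_le' fun k => hCcard k.down
    calc #(ULift.{u} ℕ) * ⨆ k : ULift.{u} ℕ, #(C k.down) ≤ κ * κ := by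
          rw [h1]; exact mul_le_mul' hκ h2
      _ = κ := Cardinal.mul_eq_self hκ
  -- key structural facts
  have hchain : iclD m n S (A ∪ Cs) ⊆ ⋃ k, iclD m n S (A ∪ C k) := by
    have e : A ∪ Cs = ⋃ k, (A ∪ C k) := by rw [hCs, Set.union_iUnion]
    rw [e]
    exact icl_chain_union hm hn fun k l hkl =>
      Set.union_subset_union (subset_refl A) (hCmono hkl)
  have hGsub : ∀ k (x : M), x ∈ iclD m n S (A ∪ C k) →
      iclD m n S (G x) ⊆ iclD m n S Cs := by
    intro k x hx
    refine icl_mono ?_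
    intro z hz
    refine Set.mem_iUnion.2 ⟨k+1, ?_⟩
    rw [hCsucc]
    exact Or.inr (Set.mem_biUnion hx hz)
  have hmain : ∀ z ∈ iclD m n S (A ∪ Cs), z ∈ iclD m n S B → z ∈ iclD m n S Cs := by
    intro z hz hzB
    obtain ⟨k, hk⟩ := Set.mem_iUnion.1 (hchain hz)
    exact hGsub k z hk (hGcl z ⟨hzB, Or.inl rfl⟩)
  have hincf : ∀ x ∈ iclD m n S (A ∪ Cs), x ∉ iclD m n S Cs →
      ∀ y ∈ iclD m n S B, y ∉ iclD m n S Cs → ¬(S.inc x y ∨ S.inc y x) := by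
    intro x hx hxn y hy hyn hxy
    obtain ⟨k, hk⟩ := Set.mem_iUnion.1 (hchain hx)
    have hxB : x ∉ iclD m n S B := fun h => hxn (hmain x hx h)
    exact hyn (hGsub k x hk (hGcl x ⟨hy, Or.inr ⟨hxB, hxy⟩⟩))
  have hBC : B ∪ Cs = B := Set.union_eq_self_of_subset_right hCsB
  refine ⟨Cs, hCsB, hCscard, ?_, ?_⟩
  · rw [hBC]
    apply Set.Subset.antisymm
    · rintro z ⟨h1, h2⟩
      exact hmain z h1 h2
    · exact Set.subset_inter (icl_mono Set.subset_union_right) (icl_mono hCsB)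
  · rw [hBC]
    intro x hx hxn y hy hyn
    refine ⟨fun h => hincf x hx hxn y hy hyn (Or.inl h),
      fun h => hincf x hx hxn y hy hyn (Or.inr h), fun h => hxn ?_⟩
    subst h
    exact hmain x hx hy

end IclAux

/-- Local character of `⫝^I` in a member of `T^c_{m,n}`: for all `A, B` there is
`C ⊆ B` with `|C| ≤ |A| + ℵ₀` such that `A ⫝^I_C B`. -/
theorem statement_17 (m n : ℕ) (hm : 1 ≤ m) (hn : 1 ≤ n)
    {M : Type u} (S : IncidenceData M) (hS : Complete m n S) (A B : Set M) :
    ∃ C : Set M, C ⊆ B ∧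
      Cardinal.mk C ≤ Cardinal.mk A + Cardinal.aleph0 ∧
      IndepI m n S A B C := by
  obtain ⟨C, h1, h2, h3, h4⟩ := IclAux.statement_17' hS hm hn A B
  refine ⟨C, h1, h2, ?_⟩
  unfold IndepI
  exact ⟨h3, h4⟩
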